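/- Let G be a finitely generated group that does not surject onto the Klein four-group ℤ/2ℤ × ℤ/2ℤ, and let A, B be proper subgroups of G. Then G admits a finite generating set S with S ∩ (A ∪ B) = ∅. -/

import Mathlib

open Subgroup

/-- Two proper subgroups do not cover a group. -/
private lemma exists_notMem_two {G : Type*} [Group G] {A B : Subgroup G}
    (hA : A ≠ ⊤) (hB : B ≠ ⊤) : ∃ g : G, g ∉ A ∧ g ∉ B := by
  obtain ⟨a, ha⟩ : ∃ a, a ∉ A := by
    by_contra h; push_neg at h; exact hA (Subgroup.eq_top_iff' A |>.mpr h)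
  obtain ⟨b, hb⟩ : ∃ b, b ∉ B := by
    by_contra h; push_neg at h; exact hB (Subgroup.eq_top_iff' B |>.mpr h)
  by_cases hab : a ∈ B
  · by_cases hba : b ∈ A
    · refine ⟨a * b, fun h => ha ?_, fun h => hb ?_⟩
      · have := mul_mem h (inv_mem hba); simpa using this
      · have := mul_mem (inv_mem hab) h; simpa using this
    · exact ⟨b, hba, hb⟩
  · exact ⟨a, ha, hab⟩

/-- Key product lemma for three covering subgroups. -/
private lemma key_mul {G : Type*} [Group G] {P Q R : Subgroup G}
    (cover : ∀ x : G, x ∈ P ∨ x ∈ Q ∨ x ∈ R)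
    (hQR : ∀ x : G, x ∈ Q → x ∈ R → x ∈ P)
    {p q : G} (hpP : p ∈ P) (hpQ : p ∉ Q) (hpR : p ∉ R)
    (hqQ : q ∈ Q) (hqP : q ∉ P) (hqR : q ∉ R) :
    ∀ x y : G, x ∉ P → y ∉ P → x * y ∈ P := by
  intro x y hx hy
  by_cases hxQ : x ∈ Q
  · have hxR : x ∉ R := fun h => hx (hQR x hxQ h)
    by_cases hyQ : y ∈ Q
    · -- both in Q
      have hyR : y ∉ R := fun h => hy (hQR y hyQ h)
      have h1 : y * p ∈ R := by
        rcases cover (y * p) with h | h | h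
        · exact absurd (by simpa using mul_mem h (inv_mem hpP)) hy
        · exact absurd (by simpa using mul_mem (inv_mem hyQ) h) hpQ
        · exact h
      have h2 : x * (y * p) ∈ P := by
        rcases cover (x * (y * p)) with h | h | h
        · exact h
        · exact absurd (by simpa using mul_mem (inv_mem hxQ) h) fun hh =>
            hpQ (by simpa using mul_mem (inv_mem hyQ) hh)
        · exact absurd (by simpa [mul_assoc] using mul_mem h (inv_mem h1)) hxR
      have := mul_mem h2 (inv_mem hpP)
      simpa [mul_assoc] using this
    · -- x ∈ Q, y ∈ R
      have hyR : y ∈ R := (cover y).resolve_left hy |>.resolve_left hyQ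
      rcases cover (x * y) with h | h | h
      · exact h
      · exact absurd (by simpa using mul_mem (inv_mem hxQ) h) hyQ
      · exact absurd (by simpa using mul_mem h (inv_mem hyR)) hxR
  · -- x ∈ R
    have hxR : x ∈ R := (cover x).resolve_left hx |>.resolve_left hxQ
    by_cases hyQ : y ∈ Q
    · have hyR : y ∉ R := fun h => hy (hQR y hyQ h)
      rcases cover (x * y) with h | h | h
      · exact h
      · exact absurd (by simpa using mul_mem h (inv_mem hyQ)) hxQ
      · exact absurd (by simpa using mul_mem (inv_mem hxR) h) hyR
    · have hyR : y ∈ R := (cover y).resolve_left hy |>.resolve_left hyQ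
      have h1 : y * q ∈ P := by
        rcases cover (y * q) with h | h | h
        · exact h
        · exact absurd (by simpa using mul_mem h (inv_mem hqQ)) hyQ
        · exact absurd (by simpa using mul_mem (inv_mem hyR) h) hqR
      have h2 : x * (y * q) ∈ Q := by
        rcases cover (x * (y * q)) with h | h | h
        · exact absurd (by simpa [mul_assoc] using mul_mem h (inv_mem h1)) hx
        · exact h
        · exact absurd (by simpa using mul_mem (inv_mem hxR) h) fun hh =>
            hqR (by simpa using mul_mem (inv_mem hyR) hh)
      have h3 : x * y ∈ Q := by
        have := mul_mem h2 (inv_mem hqQ); simpa [mul_assoc] using this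
      exact hQR _ h3 (mul_mem hxR hyR)


private lemma mem_closure_finset {G : Type*} [Group G] {X : Set G} {t : G}
    (ht : t ∈ Subgroup.closure X) :
    ∃ F : Finset G, ↑F ⊆ X ∧ t ∈ Subgroup.closure (F : Set G) := by
  classical
  induction ht using Subgroup.closure_induction with
  | mem x hx => exact ⟨{x}, by simpa using hx, Subgroup.subset_closure (by simp)⟩
  | one => exact ⟨∅, by simp, one_mem _⟩
  | mul x y hx hy ihx ihy =>
    obtain ⟨F1, hF1, h1⟩ := ihx
    obtain ⟨F2, hF2, h2⟩ := ihy
    refine ⟨F1 ∪ F2, by simp [Set.union_subset_iff, hF1, hF2], mul_mem ?_ ?_⟩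
    · exact Subgroup.closure_mono (by simp) h1
    · exact Subgroup.closure_mono (by simp) h2
  | inv x hx ih =>
    obtain ⟨F, hF, h⟩ := ih
    exact ⟨F, hF, inv_mem h⟩

theorem exists_generating_set_avoiding_two_proper_subgroups
    {G : Type*} [Group G] (hfg : Group.FG G)
    (hK : ¬∃ f : G →* Multiplicative (ZMod 2 × ZMod 2), Function.Surjective f)
    (A B : Subgroup G) (hA : A ≠ ⊤) (hB : B ≠ ⊤) :
    ∃ S : Finset G, Subgroup.closure (S : Set G) = ⊤ ∧
      ∀ s ∈ S, s ∉ A ∧ s ∉ B := by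
  classical
  set X : Set G := {x | x ∉ A ∧ x ∉ B} with hX
  set H : Subgroup G := Subgroup.closure X with hHdef
  by_cases hH : H = ⊤
  · -- extract a finite generating subset of X
    obtain ⟨T, hT⟩ : ∃ T : Finset G, Subgroup.closure (T : Set G) = ⊤ := hfg.out
    choose F hFX hFmem using fun t : G => fun (h : t ∈ H) => mem_closure_finset h
    have hmem : ∀ t : G, t ∈ H := fun t => hH ▸ Subgroup.mem_top t
    refine ⟨T.biUnion (fun t => F t (hmem t)), ?_, ?_⟩
    · rw [eq_top_iff, ← hT, Subgroup.closure_le]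
      intro t ht
      have := hFmem t (hmem t)
      refine SetLike.mem_coe.mpr (Subgroup.closure_mono ?_ this)
      intro x hx
      exact Finset.mem_coe.mpr (Finset.mem_biUnion.mpr ⟨t, ht, hx⟩)
    · intro s hs
      obtain ⟨t, _, hst⟩ := Finset.mem_biUnion.mp hs
      exact hFX t (hmem t) hst
  · -- build a surjection onto the Klein four group
    exfalso
    have cover : ∀ x : G, x ∈ A ∨ x ∈ B ∨ x ∈ H := by
      intro x
      by_cases h1 : x ∈ A
      · exact Or.inl h1
      by_cases h2 : x ∈ B
      · exact Or.inr (Or.inl h2)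
      · exact Or.inr (Or.inr (Subgroup.subset_closure ⟨h1, h2⟩))
    -- elements of each pure type
    obtain ⟨g0, hg0A, hg0B⟩ := exists_notMem_two hA hB
    have hg0H : g0 ∈ H := Subgroup.subset_closure ⟨hg0A, hg0B⟩
    obtain ⟨a0, ha0B, ha0H⟩ := exists_notMem_two hB hH
    have ha0A : a0 ∈ A := ((cover a0).resolve_right (by tauto))
    obtain ⟨b0, hb0A, hb0H⟩ := exists_notMem_two hA hH
    have hb0B : b0 ∈ B := by rcases cover b0 with h|h|h <;> tauto
    -- intersection lemmas
    have hBH : ∀ x : G, x ∈ B → x ∈ H → x ∈ A := by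
      intro x hxB hxH
      have h1 : x * a0 ∈ A := by
        rcases cover (x * a0) with h | h | h
        · exact h
        · exact absurd (by simpa using mul_mem (inv_mem hxB) h) ha0B
        · exact absurd (by simpa using mul_mem (inv_mem hxH) h) ha0H
      have := mul_mem h1 (inv_mem ha0A); simpa using this
    have hAH : ∀ x : G, x ∈ A → x ∈ H → x ∈ B := by
      intro x hxA hxH
      have h1 : x * b0 ∈ B := by
        rcases cover (x * b0) with h | h | h
        · exact absurd (by simpa using mul_mem (inv_mem hxA) h) hb0A
        · exact h
        · exact absurd (by simpa using mul_mem (inv_mem hxH) h) hb0H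
      have := mul_mem h1 (inv_mem hb0B); simpa using this
    -- the index-two property for A and for B
    have keyA : ∀ x y : G, x ∉ A → y ∉ A → x * y ∈ A := by
      refine key_mul cover hBH ha0A ha0B ha0H hb0B hb0A hb0H
    have keyB : ∀ x y : G, x ∉ B → y ∉ B → x * y ∈ B := by
      have cover' : ∀ x : G, x ∈ B ∨ x ∈ A ∨ x ∈ H := by
        intro x; rcases cover x with h|h|h <;> tauto
      refine key_mul cover' hAH hb0B hb0A hb0H ha0A ha0B ha0H
    -- define the homomorphism
    let f1 : G → ZMod 2 := fun x => if x ∈ A then 0 else 1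
    let f2 : G → ZMod 2 := fun x => if x ∈ B then 0 else 1
    have hf1 : ∀ x y : G, f1 (x * y) = f1 x + f1 y := by
      intro x y
      by_cases hx : x ∈ A <;> by_cases hy : y ∈ A
      · simp [f1, hx, hy, mul_mem hx hy]
      · have : x * y ∉ A := fun h => hy (by simpa using mul_mem (inv_mem hx) h)
        simp [f1, hx, hy, this]
      · have : x * y ∉ A := fun h => hx (by simpa using mul_mem h (inv_mem hy))
        simp [f1, hx, hy, this]
      · have h := keyA x y hx hy
        simp only [f1, hx, hy, h, if_true, if_pos, if_neg, not_false_iff]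
        decide
    have hf2 : ∀ x y : G, f2 (x * y) = f2 x + f2 y := by
      intro x y
      by_cases hx : x ∈ B <;> by_cases hy : y ∈ B
      · simp [f2, hx, hy, mul_mem hx hy]
      · have : x * y ∉ B := fun h => hy (by simpa using mul_mem (inv_mem hx) h)
        simp [f2, hx, hy, this]
      · have : x * y ∉ B := fun h => hx (by simpa using mul_mem h (inv_mem hy))
        simp [f2, hx, hy, this]
      · have h := keyB x y hx hy
        simp only [f2, hx, hy, h, if_true, if_pos, if_neg, not_false_iff]
        decide
    refine hK ⟨⟨⟨fun x => Multiplicative.ofAdd (f1 x, f2 x), ?_⟩, ?_⟩, ?_⟩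
    · simp [f1, f2, one_mem]
    · intro x y
      simp only []
      rw [← ofAdd_add]
      congr 1
      exact Prod.ext (hf1 x y) (hf2 x y)
    · intro z
      suffices h : ∀ u v : ZMod 2, ∃ x : G, f1 x = u ∧ f2 x = v by
        obtain ⟨x, h1x, h2x⟩ := h (Multiplicative.toAdd z).1 (Multiplicative.toAdd z).2
        refine ⟨x, ?_⟩
        show Multiplicative.ofAdd (f1 x, f2 x) = z
        rw [h1x, h2x]
        rfl
      intro u v
      fin_cases u <;> fin_cases v
      · exact ⟨1, by simp [f1, f2, one_mem]; rfl⟩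
      · exact ⟨a0, by simp [f1, f2, ha0A, ha0B]; exact ⟨rfl, rfl⟩⟩
      · exact ⟨b0, by simp [f1, f2, hb0A, hb0B]; exact ⟨rfl, rfl⟩⟩
      · exact ⟨g0, by simp [f1, f2, hg0A, hg0B]; rfl⟩
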